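/- Let [T1,T1'] be a Tamari interval of size n with interval-poset P, and let Q be an interval-poset of size n. Then Q is the interval-poset of an interval of the form [T2,T1'] with T1 ≤ T2 ≤ T1' if and only if Q contains all relations of P and every relation of Q not in P is decreasing. Symmetrically, Q is the interval-poset of an interval of the form [T1,T3] with T1 ≤ T3 ≤ T1' if and only if Q contains all relations of P and every relation of Q not in P is increasing. -/

import Mathlib

/-- Planar binary trees: empty, or a node with a left and a right subtree. -/
inductive BinTree : Type where
  | leaf : BinTree
  | node : BinTree → BinTree → BinTree
  deriving DecidableEq

namespace BinTree

/-- Size: number of internal nodes. -/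
def size : BinTree → ℕ
  | leaf => 0
  | node l r => l.size + r.size + 1

/-- `sub T o a b` : in the binary-search-tree labelling of `T` shifted by `o`
(its labels are `o+1, …, o+T.size`), the node labelled `a` lies in the subtree
rooted at the node labelled `b`, i.e. `a ⊴_T b`. -/
def sub : BinTree → ℕ → ℕ → ℕ → Prop
  | leaf, _, _, _ => False
  | node l r, o, a, b =>
      (b = o + l.size + 1 ∧ o + 1 ≤ a ∧ a ≤ o + l.size + r.size + 1) ∨
      l.sub o a b ∨ r.sub (o + l.size + 1) a b

/-- One right rotation, applied at any position of the tree. -/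
inductive Rot : BinTree → BinTree → Prop
  | base (A B C : BinTree) : Rot (node (node A B) C) (node A (node B C))
  | left {l l' : BinTree} (r : BinTree) : Rot l l' → Rot (node l r) (node l' r)
  | right (l : BinTree) {r r' : BinTree} : Rot r r' → Rot (node l r) (node l r')

/-- max label of the subtree rooted at label `y` (labels in `(o, o+size]`);
    equals `y` when `y` is out of range. -/
def fvec : BinTree → ℕ → ℕ → ℕ
  | leaf, _, y => y
  | node l r, o, y =>
      if y ≤ o + l.size then fvec l o y
      else if y = o + l.size + 1 then o + l.size + r.size + 1
      else fvec r (o + l.size + 1) y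

/-- min label of the subtree rooted at label `y`. -/
def gvec : BinTree → ℕ → ℕ → ℕ
  | leaf, _, y => y
  | node l r, o, y =>
      if y ≤ o + l.size then gvec l o y
      else if y = o + l.size + 1 then o + 1
      else gvec r (o + l.size + 1) y

lemma fvec_bounds : ∀ (T : BinTree) (o y : ℕ), o < y → y ≤ o + T.size →
    y ≤ fvec T o y ∧ fvec T o y ≤ o + T.size := by
  intro T
  induction T with
  | leaf => intro o y h1 h2; simp [size] at h2; omega
  | node l r ihl ihr =>
    intro o y h1 h2
    simp only [fvec, size] at *
    split_ifs with hc1 hc2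
    · have := ihl o y h1 hc1; omega
    · omega
    · have := ihr (o + l.size + 1) y (by omega) (by omega); omega

lemma gvec_bounds : ∀ (T : BinTree) (o y : ℕ), o < y → y ≤ o + T.size →
    o < gvec T o y ∧ gvec T o y ≤ y := by
  intro T
  induction T with
  | leaf => intro o y h1 h2; simp [size] at h2; omega
  | node l r ihl ihr =>
    intro o y h1 h2
    simp only [gvec, size] at *
    split_ifs with hc1 hc2
    · have := ihl o y h1 hc1; omega
    · omega
    · have := ihr (o + l.size + 1) y (by omega) (by omega); omega

lemma sub_iff : ∀ (T : BinTree) (o x y : ℕ),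
    T.sub o x y ↔ (o < y ∧ y ≤ o + T.size ∧ gvec T o y ≤ x ∧ x ≤ fvec T o y) := by
  intro T
  induction T with
  | leaf => intro o x y; simp [sub, size]; omega
  | node l r ihl ihr =>
    intro o x y
    simp only [sub, size, fvec, gvec, ihl, ihr]
    split_ifs with hc1 hc2 <;> constructor
    · rintro (⟨h, _, _⟩ | h | h) <;> omega
    · intro h; right; left; omega
    · rintro (⟨h, h1, h2⟩ | h | h) <;> omega
    · intro h; left; omega
    · rintro (⟨h, _, _⟩ | h | h) <;> omega
    · intro h; right; right; omega

lemma sub_support {T : BinTree} {o x y : ℕ} (h : T.sub o x y) :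
    o < x ∧ x ≤ o + T.size ∧ o < y ∧ y ≤ o + T.size := by
  rw [sub_iff] at h
  obtain ⟨h1, h2, h3, h4⟩ := h
  have hf := fvec_bounds T o y h1 h2
  have hg := gvec_bounds T o y h1 h2
  omega

/-- Subtree nesting: if `y` is in the subtree of `z`, its span is contained. -/
lemma nest : ∀ (T : BinTree) (o y z : ℕ), T.sub o y z →
    fvec T o y ≤ fvec T o z ∧ gvec T o z ≤ gvec T o y := by
  intro T
  induction T with
  | leaf => intro o y z h; exact absurd h (by simp [sub])
  | node l r ihl ihr =>
    intro o y z h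
    rcases h with ⟨hz, hy1, hy2⟩ | h | h
    · subst hz
      simp only [fvec, gvec, size]
      rcases Nat.lt_or_ge (o + l.size) y with hy | hy
      · rcases Nat.eq_or_lt_of_le (Nat.succ_le_of_lt hy) with hy' | hy'
        · split_ifs <;> omega
        · have h1 := fvec_bounds r (o + l.size + 1) y (by omega) (by omega)
          have h2 := gvec_bounds r (o + l.size + 1) y (by omega) (by omega)
          split_ifs <;> omega
      · have h1 := fvec_bounds l o y (by omega) hy
        have h2 := gvec_bounds l o y (by omega) hy
        split_ifs <;> omega
    · have hs := sub_support h
      have := ihl o y z h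
      simp only [fvec, gvec]
      rw [if_pos (by omega), if_pos (by omega), if_pos (by omega), if_pos (by omega)]
      exact this
    · have hs := sub_support h
      have := ihr (o + l.size + 1) y z h
      simp only [fvec, gvec]
      rw [if_neg (by omega), if_neg (by omega), if_neg (by omega), if_neg (by omega),
        if_neg (by omega), if_neg (by omega), if_neg (by omega), if_neg (by omega)]
      exact this

lemma sub_antisymm : ∀ (T : BinTree) (o x y : ℕ), T.sub o x y → T.sub o y x → x = y := by
  intro T
  induction T with
  | leaf => intro o x y h; exact absurd h (by simp [sub])
  | node l r ihl ihr =>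
    intro o x y h1 h2
    rcases h1 with ⟨hy, _, _⟩ | h1 | h1
    · rcases h2 with ⟨hx, _, _⟩ | h2 | h2
      · omega
      · have := sub_support h2; omega
      · have := sub_support h2; omega
    · have hs1 := sub_support h1
      rcases h2 with ⟨hx, _, _⟩ | h2 | h2
      · omega
      · exact ihl o x y h1 h2
      · have := sub_support h2; omega
    · have hs1 := sub_support h1
      rcases h2 with ⟨hx, _, _⟩ | h2 | h2
      · omega
      · have := sub_support h2; omega
      · exact ihr (o + l.size + 1) x y h1 h2

/-- Least common ancestor of `x ≤ y` lies between them. -/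
lemma join : ∀ (T : BinTree) (o x y : ℕ), o < x → x ≤ y → y ≤ o + T.size →
    ∃ m, x ≤ m ∧ m ≤ y ∧ T.sub o x m ∧ T.sub o y m := by
  intro T
  induction T with
  | leaf => intro o x y h1 h2 h3; simp [size] at h3; omega
  | node l r ihl ihr =>
    intro o x y h1 h2 h3
    simp only [size] at h3
    rcases Nat.lt_or_ge (o + l.size) y with hy | hy
    · rcases Nat.lt_or_ge (o + l.size + 1) x with hx | hx
      · obtain ⟨m, hm1, hm2, hm3, hm4⟩ := ihr (o + l.size + 1) x y hx h2 (by omega)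
        exact ⟨m, hm1, hm2, Or.inr (Or.inr hm3), Or.inr (Or.inr hm4)⟩
      · exact ⟨o + l.size + 1, by omega, by omega, Or.inl ⟨rfl, by omega, by omega⟩,
          Or.inl ⟨rfl, by omega, by omega⟩⟩
    · obtain ⟨m, hm1, hm2, hm3, hm4⟩ := ihl o x y h1 h2 hy
      exact ⟨m, hm1, hm2, Or.inr (Or.inl hm3), Or.inr (Or.inl hm4)⟩

/-- `fvec x + 1` is an ancestor of `x` (when in range). -/
lemma succ_ancestor (T : BinTree) (o x : ℕ) (hx1 : o < x) (hx2 : x ≤ o + T.size)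
    (hf : fvec T o x < o + T.size) : T.sub o x (fvec T o x + 1) := by
  have hb := fvec_bounds T o x hx1 hx2
  obtain ⟨m, hm1, hm2, hm3, hm4⟩ := join T o x (fvec T o x + 1) hx1 (by omega) (by omega)
  rcases Nat.eq_or_lt_of_le hm2 with h | h
  · rw [← h] at hm4 ⊢; exact hm3
  · exfalso
    have hmx : m = x := by
      refine sub_antisymm T o m x ?_ hm3
      rw [sub_iff]
      have hg := gvec_bounds T o x hx1 hx2
      refine ⟨hx1, hx2, by omega, by omega⟩
    subst hmx
    have := (sub_iff T o (fvec T o m + 1) m).1 hm4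
    omega

lemma fvec_out : ∀ (T : BinTree) (o y : ℕ), (y ≤ o ∨ o + T.size < y) → fvec T o y = y := by
  intro T
  induction T with
  | leaf => intro o y _; rfl
  | node l r ihl ihr =>
    intro o y h
    simp only [size] at h
    simp only [fvec]
    split_ifs with h1 h2
    · exact ihl o y (by omega)
    · omega
    · exact ihr (o + l.size + 1) y (by omega)

lemma gvec_out : ∀ (T : BinTree) (o y : ℕ), (y ≤ o ∨ o + T.size < y) → gvec T o y = y := by
  intro T
  induction T with
  | leaf => intro o y _; rfl
  | node l r ihl ihr =>
    intro o y h
    simp only [size] at h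
    simp only [gvec]
    split_ifs with h1 h2
    · exact ihl o y (by omega)
    · omega
    · exact ihr (o + l.size + 1) y (by omega)

lemma rot_size : ∀ {A B : BinTree}, Rot A B → A.size = B.size := by
  intro A B h
  induction h with
  | base A B C => simp [size]; omega
  | left r _ ih => simp [size]; omega
  | right l _ ih => simp [size]; omega

lemma rot_fvec_le : ∀ {A B : BinTree}, Rot A B → ∀ o y, fvec A o y ≤ fvec B o y := by
  intro A B h
  induction h with
  | base A B C =>
    intro o y
    simp only [fvec]
    rw [show (node A B).size = A.size + B.size + 1 from rfl]
    simp only [size]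
    rcases Nat.lt_or_ge (o + A.size) y with hy | hy
    · rcases Nat.eq_or_lt_of_le (Nat.succ_le_of_lt hy) with h1 | h1
      · split_ifs <;> omega
      · rcases Nat.lt_or_ge (o + A.size + B.size + 1) y with h2 | h2
        · rcases Nat.eq_or_lt_of_le (Nat.succ_le_of_lt h2) with h3 | h3
          · split_ifs <;> omega
          · have := fvec_bounds C (o + A.size + B.size + 2) y
            have hoff : o + (A.size + B.size + 1) + 1 = o + A.size + 1 + B.size + 1 := by ring
            have hoff2 : o + A.size + 1 + B.size + 1 = o + A.size + B.size + 2 := by ring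
            rw [hoff, hoff2]
            split_ifs <;> omega
        · have := fvec_bounds B (o + A.size + 1) y (by omega) (by omega)
          split_ifs <;> omega
    · split_ifs <;> omega
  | left r hrot ih =>
    intro o y
    have hsz := rot_size hrot
    simp only [fvec]
    rw [← hsz]
    split_ifs with h1 h2
    · exact ih o y
    · omega
    · omega
  | right l hrot ih =>
    intro o y
    have hsz := rot_size hrot
    simp only [fvec]
    split_ifs with h1 h2
    · omega
    · omega
    · exact ih (o + l.size + 1) y

lemma rot_gvec_le : ∀ {A B : BinTree}, Rot A B → ∀ o y, gvec A o y ≤ gvec B o y := by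
  intro A B h
  induction h with
  | base A B C =>
    intro o y
    simp only [gvec]
    rw [show (node A B).size = A.size + B.size + 1 from rfl]
    rcases Nat.lt_or_ge (o + A.size) y with hy | hy
    · rcases Nat.eq_or_lt_of_le (Nat.succ_le_of_lt hy) with h1 | h1
      · split_ifs <;> omega
      · rcases Nat.lt_or_ge (o + A.size + B.size + 1) y with h2 | h2
        · rcases Nat.eq_or_lt_of_le (Nat.succ_le_of_lt h2) with h3 | h3
          · split_ifs <;> omega
          · have := gvec_bounds C (o + A.size + B.size + 2) y
            have hoff : o + (A.size + B.size + 1) + 1 = o + A.size + 1 + B.size + 1 := by ring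
            have hoff2 : o + A.size + 1 + B.size + 1 = o + A.size + B.size + 2 := by ring
            rw [hoff, hoff2]
            split_ifs <;> omega
        · have := gvec_bounds B (o + A.size + 1) y (by omega) (by omega)
          split_ifs <;> omega
    · split_ifs <;> omega
  | left r hrot ih =>
    intro o y
    have hsz := rot_size hrot
    simp only [gvec]
    rw [← hsz]
    split_ifs with h1 h2
    · exact ih o y
    · omega
    · omega
  | right l hrot ih =>
    intro o y
    have hsz := rot_size hrot
    simp only [gvec]
    split_ifs with h1 h2
    · omega
    · omega
    · exact ih (o + l.size + 1) y

end BinTree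

/-- Tamari order: reflexive-transitive closure of right rotation. -/
def tamariLE : BinTree → BinTree → Prop := Relation.ReflTransGen BinTree.Rot

lemma tamari_size {A B : BinTree} (h : tamariLE A B) : A.size = B.size := by
  induction h with
  | refl => rfl
  | tail _ hr ih => exact ih.trans (BinTree.rot_size hr)

lemma tamari_fvec_le {A B : BinTree} (h : tamariLE A B) :
    ∀ o y, A.fvec o y ≤ B.fvec o y := by
  induction h with
  | refl => intro o y; exact le_refl _
  | tail _ hr ih => intro o y; exact (ih o y).trans (BinTree.rot_fvec_le hr o y)

lemma tamari_gvec_le {A B : BinTree} (h : tamariLE A B) :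
    ∀ o y, A.gvec o y ≤ B.gvec o y := by
  induction h with
  | refl => intro o y; exact le_refl _
  | tail _ hr ih => intro o y; exact (ih o y).trans (BinTree.rot_gvec_le hr o y)

namespace BinTree

lemma size_eq_zero {T : BinTree} (h : T.size = 0) : T = leaf := by
  cases T with
  | leaf => rfl
  | node l r => simp [size] at h

/-- A tree is determined by its f-vector. -/
lemma fvec_inj : ∀ (A B : BinTree) (o : ℕ), A.size = B.size →
    (∀ z, o < z → z ≤ o + A.size → A.fvec o z = B.fvec o z) → A = B := by
  intro A
  induction A with
  | leaf =>
    intro B o hsz _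
    simp only [size] at hsz
    exact (size_eq_zero hsz.symm).symm
  | node l r ihl ihr =>
    intro B o hsz hvec
    cases B with
    | leaf => simp [size] at hsz
    | node l' r' =>
      simp only [size] at hsz hvec
      have hls : l.size = l'.size := by
        by_contra hne
        rcases Nat.lt_or_ge l.size l'.size with hlt | hge
        · have h1 := hvec (o + l.size + 1) (by omega) (by omega)
          have hb := fvec_bounds l' o (o + l.size + 1) (by omega) (by omega)
          simp only [fvec] at h1
          split_ifs at h1 <;> omega
        · have h1 := hvec (o + l'.size + 1) (by omega) (by omega)
          have hb := fvec_bounds l o (o + l'.size + 1) (by omega) (by omega)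
          simp only [fvec] at h1
          split_ifs at h1 <;> omega
      have hl : l = l' := by
        apply ihl l' o hls
        intro z hz1 hz2
        have h1 := hvec z hz1 (by omega)
        simp only [fvec] at h1
        split_ifs at h1 <;> omega
      have hr : r = r' := by
        apply ihr r' (o + l.size + 1) (by omega)
        intro z hz1 hz2
        have h1 := hvec z (by omega) (by omega)
        simp only [fvec] at h1
        rw [← hls] at h1
        split_ifs at h1 <;> omega
      rw [hl, hr]

/-- If label `y` has a nonempty left subtree, we can rotate at `y`; the
rotation changes the f-vector only at the root `x` of that left subtree,
raising it from `y - 1` to `fvec y`. -/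
lemma exists_rot : ∀ (A : BinTree) (o y : ℕ), o < y → y ≤ o + A.size →
    A.gvec o y < y →
    ∃ A' x, Rot A A' ∧ o < x ∧ x < y ∧
      A.gvec o x = A.gvec o y ∧ A.fvec o x = y - 1 ∧
      A'.fvec o x = A.fvec o y ∧ ∀ z, z ≠ x → A'.fvec o z = A.fvec o z := by
  intro A
  induction A with
  | leaf => intro o y h1 h2; simp [size] at h2; omega
  | node l r ihl ihr =>
    intro o y hy1 hy2 hg
    simp only [size] at hy2
    rcases Nat.lt_or_ge (o + l.size) y with hmid | hmid
    · rcases Nat.eq_or_lt_of_le (Nat.succ_le_of_lt hmid) with hroot | hright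
      · -- y is the root
        have hroot' : y = o + l.size + 1 := hroot.symm
        have hls : 0 < l.size := by
          simp only [gvec] at hg
          split_ifs at hg <;> omega
        cases l with
        | leaf => simp [size] at hls
        | node l1 l2 =>
          simp only [size] at hroot'
          refine ⟨node l1 (node l2 r), o + l1.size + 1, Rot.base l1 l2 r, by omega,
            by omega, ?_, ?_, ?_, ?_⟩
          · simp only [gvec]
            rw [show (node l1 l2).size = l1.size + l2.size + 1 from rfl]
            split_ifs <;> omega
          · simp only [fvec]
            rw [show (node l1 l2).size = l1.size + l2.size + 1 from rfl]
            split_ifs <;> omega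
          · simp only [fvec]
            rw [show (node l1 l2).size = l1.size + l2.size + 1 from rfl]
            simp only [size]
            split_ifs <;> omega
          · intro z hz
            simp only [fvec]
            rw [show (node l1 l2).size = l1.size + l2.size + 1 from rfl]
            simp only [size]
            have hoff : o + (l1.size + l2.size + 1) + 1 = o + l1.size + 1 + l2.size + 1 := by
              ring
            rw [hoff]
            split_ifs <;> omega
      · -- y in the right subtree
        obtain ⟨A', x, hrot, hx1, hx2, hgx, hfx, hfx', hother⟩ :=
          ihr (o + l.size + 1) y (by omega) (by omega) (by
            simp only [gvec] at hg
            split_ifs at hg <;> omega)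
        have hsz := rot_size hrot
        have hxr : o + l.size + 1 < x := hx1
        refine ⟨node l A', x, Rot.right l hrot, by omega, hx2, ?_, ?_, ?_, ?_⟩
        · simp only [gvec]
          split_ifs <;> omega
        · simp only [fvec]
          split_ifs <;> omega
        · simp only [fvec]
          split_ifs <;> omega
        · intro z hz
          have h2 : z ≠ x → A'.fvec (o + l.size + 1) z = r.fvec (o + l.size + 1) z :=
            hother z
          simp only [fvec]
          split_ifs <;> [omega; omega; exact h2 hz]
    · -- y in the left subtree
      obtain ⟨l', x, hrot, hx1, hx2, hgx, hfx, hfx', hother⟩ :=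
        ihl o y hy1 hmid (by
          simp only [gvec] at hg
          split_ifs at hg <;> omega)
      have hsz := rot_size hrot
      refine ⟨node l' r, x, Rot.left r hrot, hx1, hx2, ?_, ?_, ?_, ?_⟩
      · simp only [gvec]
        split_ifs <;> omega
      · simp only [fvec]
        split_ifs <;> omega
      · simp only [fvec]
        rw [← hsz]
        split_ifs <;> omega
      · intro z hz
        have h2 : z ≠ x → l'.fvec o z = l.fvec o z := hother z
        simp only [fvec]
        rw [← hsz]
        split_ifs <;> [exact h2 hz; omega; omega]

end BinTree

namespace BinTree

/-- If the f-vector of `A` is pointwise at most that of `B`, then `A ≤ B`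
in the Tamari order. -/
lemma to_tamari_aux : ∀ (k : ℕ) (A B : BinTree), A.size = B.size →
    (∀ x, A.fvec 0 x ≤ B.fvec 0 x) →
    (Finset.Icc 1 A.size).sum (fun z => A.size - A.fvec 0 z) ≤ k →
    Relation.ReflTransGen Rot A B := by
  intro k
  induction k using Nat.strong_induction_on with
  | _ k ih =>
    intro A B hsz hf hk
    by_cases hex : ∃ x, 1 ≤ x ∧ x ≤ A.size ∧ A.fvec 0 x < B.fvec 0 x
    · set n := A.size with hn
      -- minimal such x
      have hxP := Nat.find_spec hex
      set x := Nat.find hex with hxdef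
      obtain ⟨hx1, hx2, hx3⟩ := hxP
      have hbA := fvec_bounds A 0 x (by omega) (by omega)
      have hbB := fvec_bounds B 0 x (by omega) (by omega)
      set e := A.fvec 0 x with he
      have hy2 : e + 1 ≤ n := by omega
      have hsubxy : A.sub 0 x (e + 1) := succ_ancestor A 0 x (by omega) (by omega) (by omega)
      have hgy : A.gvec 0 (e + 1) ≤ x ∧ x < e + 1 := by
        have := (sub_iff A 0 x (e + 1)).1 hsubxy
        omega
      obtain ⟨A', x', hrot, hx'0, hx'y, hg', hf', hfx', hother⟩ :=
        exists_rot A 0 (e + 1) (by omega) (by omega) (by omega)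
      have hx'2 : x' ≤ n := by omega
      -- x' = x
      have hxx : x' = x := by
        by_contra hne
        have hx'le : x' ≤ x := by
          by_contra hgt
          have hs1 : A.sub 0 x' x := by
            rw [sub_iff]
            have := gvec_bounds A 0 x (by omega) (by omega)
            refine ⟨by omega, by omega, by omega, by omega⟩
          have hs2 : A.sub 0 x x' := by
            rw [sub_iff]
            refine ⟨by omega, by omega, by omega, by omega⟩
          exact hne (sub_antisymm A 0 x' x hs1 hs2)
        have hx'lt : x' < x := by omega
        have hnP := Nat.find_min hex hx'lt
        have hBx' : B.fvec 0 x' = e := by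
          have := hf x'
          simp only [not_and, not_lt] at hnP
          have := hnP (by omega) (by omega)
          omega
        have hs3 : B.sub 0 x x' := by
          rw [sub_iff]
          have := gvec_bounds B 0 x' (by omega) (by omega)
          refine ⟨by omega, by omega, by omega, by omega⟩
        have := (nest B 0 x x' hs3).1
        omega
      subst hxx
      -- new vector still below B
      have hsub_yx : B.sub 0 (e + 1) x := by
        rw [sub_iff]
        have := gvec_bounds B 0 x (by omega) (by omega)
        refine ⟨by omega, by omega, by omega, by omega⟩
      have hBy := (nest B 0 (e + 1) x hsub_yx).1
      have hf2 : ∀ z, A'.fvec 0 z ≤ B.fvec 0 z := by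
        intro z
        by_cases hz : z = x
        · subst hz
          rw [hfx']
          exact le_trans (hf (e + 1)) hBy
        · rw [hother z hz]
          exact hf z
      have hA'sz : A'.size = A.size := (rot_size hrot).symm
      have hby : e + 1 ≤ A.fvec 0 (e + 1) ∧ A.fvec 0 (e + 1) ≤ n := by
        have := fvec_bounds A 0 (e + 1) (by omega) (by omega)
        omega
      have hlt : (Finset.Icc 1 A'.size).sum (fun z => A'.size - A'.fvec 0 z) <
          (Finset.Icc 1 A.size).sum (fun z => A.size - A.fvec 0 z) := by
        rw [hA'sz]
        apply Finset.sum_lt_sum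
        · intro i _
          by_cases hz : i = x
          · subst hz; rw [hfx']; omega
          · rw [hother i hz]
        · refine ⟨x, Finset.mem_Icc.2 ⟨by omega, by omega⟩, ?_⟩
          rw [hfx']
          omega
      have hk' : (Finset.Icc 1 A'.size).sum (fun z => A'.size - A'.fvec 0 z) < k :=
        lt_of_lt_of_le hlt hk
      exact Relation.ReflTransGen.head hrot
        (ih _ hk' A' B (by omega) hf2 (le_refl _))
    · have : A = B := by
        apply fvec_inj A B 0 hsz
        intro z hz1 hz2
        refine le_antisymm (hf z) ?_
        by_contra hlt
        exact hex ⟨z, by omega, by omega, by omega⟩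
      rw [this]


-- Build the tree with labels `(o, m]` whose f-vector is `f`.
noncomputable def treeOf (f : ℕ → ℕ) (o m : ℕ) : BinTree :=
  haveI := Classical.propDecidable (∃ z, o < z ∧ z ≤ m ∧ m ≤ f z)
  if h : o < m ∧ ∃ z, o < z ∧ z ≤ m ∧ m ≤ f z then
    node (treeOf f o (Nat.find h.2 - 1)) (treeOf f (Nat.find h.2) m)
  else leaf
termination_by m - o
decreasing_by
  · have hs := Nat.find_spec h.2; omega
  · have hs := Nat.find_spec h.2; omega

lemma treeOf_spec : ∀ (k : ℕ) (f : ℕ → ℕ) (o m : ℕ), m - o ≤ k →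
    (∀ z, o < z → z ≤ m → z ≤ f z ∧ f z ≤ m) →
    (∀ y z, o < y → y ≤ m → y < z → z ≤ f y → f z ≤ f y) →
    (treeOf f o m).size = m - o ∧
      ∀ z, o < z → z ≤ m → (treeOf f o m).fvec o z = f z := by
  intro k
  induction k using Nat.strong_induction_on with
  | _ k ih =>
    intro f o m hk hub hnest
    by_cases hom : o < m
    · have hcond : o < m ∧ ∃ z, o < z ∧ z ≤ m ∧ m ≤ f z :=
        ⟨hom, ⟨m, hom, le_refl m, (hub m hom (le_refl m)).1⟩⟩
      rw [treeOf, dif_pos hcond]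
      have hx := Nat.find_spec hcond.2
      set x := Nat.find hcond.2 with hxd
      obtain ⟨hxo, hxm, hxf⟩ := hx
      have hfx : f x = m := le_antisymm (hub x hxo hxm).2 hxf
      have hubL : ∀ z, o < z → z ≤ x - 1 → z ≤ f z ∧ f z ≤ x - 1 := by
        intro z hz1 hz2
        refine ⟨(hub z hz1 (by omega)).1, ?_⟩
        by_contra hc
        have hzx : z < x := by omega
        have h1 := hnest z x hz1 (by omega) hzx (by omega)
        exact Nat.find_min hcond.2 hzx ⟨hz1, by omega, by omega⟩
      have ihL := ih (m - o - 1) (by omega) f o (x - 1) (by omega) hubL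
        (fun y z h1 h2 h3 h4 => hnest y z h1 (by omega) h3 h4)
      have ihR := ih (m - o - 1) (by omega) f x m (by omega)
        (fun z h1 h2 => hub z (by omega) h2)
        (fun y z h1 h2 h3 h4 => hnest y z (by omega) h2 h3 h4)
      constructor
      · simp only [size, ihL.1, ihR.1]; omega
      · intro z hz1 hz2
        simp only [fvec, ihL.1, ihR.1]
        split_ifs with c1 c2
        · exact ihL.2 z hz1 (by omega)
        · have hzx : z = x := by omega
          subst hzx
          omega
        · have ho : o + (x - 1 - o) + 1 = x := by omega
          rw [ho]
          exact ihR.2 z (by omega) hz2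
    · rw [treeOf, dif_neg (fun h => absurd h.1 (by omega))]
      refine ⟨by simp only [size]; omega, fun z hz1 hz2 => by omega⟩

end BinTree

/-- `incRel T a c` : `a` is below `c` in the initial forest `inc T`. -/
def incRel (T : BinTree) (a c : ℕ) : Prop := a < c ∧ T.sub 0 a c

/-- `decRel T c a` : `c` is below `a` in the final forest `dec T`. -/
def decRel (T : BinTree) (c a : ℕ) : Prop := a < c ∧ T.sub 0 c a

/-- An interval-poset: a partial order on `{1, …, n}` in which, whenever
`a ⊴ c` and `a < c`, all `a < b < c` satisfy `b ⊴ c`, and whenever `c ⊴ a` and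
`a < c`, all `a < b < c` satisfy `b ⊴ a`.  `rel x y` means "`x` is below `y`". -/
structure IntervalPoset : Type where
  n : ℕ
  rel : ℕ → ℕ → Prop
  supp : ∀ a b, rel a b → 1 ≤ a ∧ a ≤ n ∧ 1 ≤ b ∧ b ≤ n
  refl : ∀ a, 1 ≤ a → a ≤ n → rel a a
  antisymm : ∀ a b, rel a b → rel b a → a = b
  trans : ∀ a b c, rel a b → rel b c → rel a c
  incCond : ∀ a b c, rel a c → a < b → b < c → rel b c
  decCond : ∀ a b c, rel c a → a < b → b < c → rel b a

/-- The partial order on `{1, …, n}` generated by a family `r` of relations. -/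
def genClos (n : ℕ) (r : ℕ → ℕ → Prop) : ℕ → ℕ → Prop :=
  fun a b => (a = b ∧ 1 ≤ a ∧ a ≤ n) ∨ Relation.TransGen r a b

/-- The relation of the interval-poset `P_{[T1,T2]}` of a Tamari interval: the
partial order on `{1, …, n}` generated by the relations of `dec T1` together
with those of `inc T2`. -/
def pairRel (n : ℕ) (T1 T2 : BinTree) : ℕ → ℕ → Prop :=
  genClos n (fun x y => decRel T1 x y ∨ incRel T2 x y)

lemma decRel_iff {A : BinTree} {c a : ℕ} :
    decRel A c a ↔ a < c ∧ 0 < a ∧ c ≤ A.fvec 0 a := by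
  constructor
  · rintro ⟨h1, h2⟩
    rw [BinTree.sub_iff] at h2
    exact ⟨h1, by omega, by omega⟩
  · rintro ⟨h1, h2, h3⟩
    refine ⟨h1, ?_⟩
    rcases Nat.lt_or_ge A.size a with hout | hin
    · rw [BinTree.fvec_out A 0 a (by omega)] at h3; omega
    · rw [BinTree.sub_iff]
      have := BinTree.gvec_bounds A 0 a (by omega) (by omega)
      exact ⟨by omega, by omega, by omega, h3⟩

lemma incRel_iff {B : BinTree} {a c : ℕ} :
    incRel B a c ↔ a < c ∧ c ≤ B.size ∧ B.gvec 0 c ≤ a := by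
  constructor
  · rintro ⟨h1, h2⟩
    rw [BinTree.sub_iff] at h2
    exact ⟨h1, by omega, by omega⟩
  · rintro ⟨h1, h2, h3⟩
    refine ⟨h1, ?_⟩
    rw [BinTree.sub_iff]
    have := BinTree.fvec_bounds B 0 c (by omega) (by omega)
    exact ⟨by omega, by omega, h3, by omega⟩

lemma decRel_supp {A : BinTree} {c a : ℕ} (h : decRel A c a) :
    1 ≤ a ∧ a ≤ A.size ∧ 1 ≤ c ∧ c ≤ A.size := by
  obtain ⟨h1, h2⟩ := h
  have := BinTree.sub_support h2
  omega

lemma incRel_supp {B : BinTree} {a c : ℕ} (h : incRel B a c) :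
    1 ≤ a ∧ a ≤ B.size ∧ 1 ≤ c ∧ c ≤ B.size := by
  obtain ⟨h1, h2⟩ := h
  have := BinTree.sub_support h2
  omega

/-- Composition: an already-shaped relation composed with a generator stays shaped. -/
lemma shape_comp {n : ℕ} {A B : BinTree} (hA : A.size = n) (hB : B.size = n)
    (hf : ∀ x, A.fvec 0 x ≤ B.fvec 0 x) (hg : ∀ x, A.gvec 0 x ≤ B.gvec 0 x)
    {a b c : ℕ}
    (h1 : (a = b ∧ 1 ≤ a ∧ a ≤ n) ∨ decRel A a b ∨ incRel B a b)
    (h2 : decRel A b c ∨ incRel B b c) :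
    (a = c ∧ 1 ≤ a ∧ a ≤ n) ∨ decRel A a c ∨ incRel B a c := by
  rcases h1 with ⟨rfl, _, _⟩ | h1 | h1
  · exact Or.inr h2
  · -- a below b via a decreasing relation of A
    have hd1 := decRel_iff.1 h1
    have hs1 := decRel_supp h1
    rcases h2 with h2 | h2
    · -- dec ∘ dec
      have hd2 := decRel_iff.1 h2
      have hs2 := decRel_supp h2
      have hsub : A.sub 0 b c := h2.2
      have hnest := (BinTree.nest A 0 b c hsub).1
      exact Or.inr (Or.inl (decRel_iff.2 ⟨by omega, by omega, by omega⟩))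
    · -- dec ∘ inc : forced increasing
      have hi2 := incRel_iff.1 h2
      have hac : a < c := by
        by_contra hge
        have hdc : decRel A c b := decRel_iff.2 ⟨by omega, by omega, by omega⟩
        have hgc : ¬ A.gvec 0 c ≤ b := by
          intro hle
          have hsub2 : A.sub 0 b c := by
            rw [BinTree.sub_iff]
            have := BinTree.fvec_bounds A 0 c (by omega) (by omega)
            exact ⟨by omega, by omega, hle, by omega⟩
          have := BinTree.sub_antisymm A 0 b c hsub2 hdc.2
          omega
        exact hgc (le_trans (hg c) hi2.2.2)
      exact Or.inr (Or.inr (incRel_iff.2 ⟨hac, by omega, by omega⟩))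
  · -- a below b via an increasing relation of B
    have hi1 := incRel_iff.1 h1
    have hs1 := incRel_supp h1
    rcases h2 with h2 | h2
    · -- inc ∘ dec
      have hd2 := decRel_iff.1 h2
      have hs2 := decRel_supp h2
      rcases lt_trichotomy a c with hlt | heq | hgt
      · -- stays increasing
        have hsubB : B.sub 0 b c := by
          rw [BinTree.sub_iff]
          have hgb := BinTree.gvec_bounds B 0 c (by omega) (by omega)
          have hfb := hf c
          exact ⟨by omega, by omega, by omega, by omega⟩
        have hnest := (BinTree.nest B 0 b c hsubB).2
        exact Or.inr (Or.inr (incRel_iff.2 ⟨hlt, by omega, by omega⟩))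
      · exact Or.inl ⟨heq, by omega, by omega⟩
      · exact Or.inr (Or.inl (decRel_iff.2 ⟨hgt, by omega, by omega⟩))
    · -- inc ∘ inc
      have hi2 := incRel_iff.1 h2
      have hsubB : B.sub 0 b c := h2.2
      have hnest := (BinTree.nest B 0 b c hsubB).2
      exact Or.inr (Or.inr (incRel_iff.2 ⟨by omega, by omega, by omega⟩))

/-- For a Tamari interval, the generated poset adds no relation beyond
`dec T1 ∪ inc T2` (and reflexivity). -/
lemma closure_shape {n : ℕ} {A B : BinTree} (hA : A.size = n) (hB : B.size = n)
    (hf : ∀ x, A.fvec 0 x ≤ B.fvec 0 x) (hg : ∀ x, A.gvec 0 x ≤ B.gvec 0 x)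
    {a b : ℕ} (h : pairRel n A B a b) :
    (a = b ∧ 1 ≤ a ∧ a ≤ n) ∨ decRel A a b ∨ incRel B a b := by
  rcases h with h | h
  · exact Or.inl h
  · induction h with
    | single h => exact Or.inr h
    | tail _ hstep ih => exact shape_comp hA hB hf hg ih hstep

/-- Main lemma, first half: raising the lower endpoint ↔ adding only
decreasing relations. -/
lemma stmt_part1 (n : ℕ) (T1 T1' : BinTree) (h1 : T1.size = n) (h1' : T1'.size = n)
    (hle : tamariLE T1 T1') (Q : IntervalPoset) (hQn : Q.n = n) :
    (∃ T2 : BinTree, T2.size = n ∧ tamariLE T1 T2 ∧ tamariLE T2 T1' ∧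
        Q.rel = pairRel n T2 T1') ↔
      ((∀ a b, pairRel n T1 T1' a b → Q.rel a b) ∧
        ∀ a b, Q.rel a b → ¬ pairRel n T1 T1' a b → b < a) := by
  classical
  have hf11' : ∀ x, T1.fvec 0 x ≤ T1'.fvec 0 x := tamari_fvec_le hle 0
  have hg11' : ∀ x, T1.gvec 0 x ≤ T1'.gvec 0 x := tamari_gvec_le hle 0
  constructor
  · rintro ⟨T2, hsz2, h12, h21', hQ⟩
    have hf12 : ∀ x, T1.fvec 0 x ≤ T2.fvec 0 x := tamari_fvec_le h12 0
    have hf21' : ∀ x, T2.fvec 0 x ≤ T1'.fvec 0 x := tamari_fvec_le h21' 0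
    have hg21' : ∀ x, T2.gvec 0 x ≤ T1'.gvec 0 x := tamari_gvec_le h21' 0
    constructor
    · intro a b hP
      rw [hQ]
      rcases hP with h | h
      · exact Or.inl h
      · refine Or.inr (Relation.TransGen.mono ?_ _ _ h)
        rintro x y (hd | hi)
        · have := decRel_iff.1 hd
          exact Or.inl (decRel_iff.2 ⟨this.1, this.2.1, le_trans this.2.2 (hf12 y)⟩)
        · exact Or.inr hi
    · intro a b hQr hnP
      rw [hQ] at hQr
      rcases closure_shape hsz2 h1' hf21' hg21' hQr with hr | hd | hi
      · exact absurd (Or.inl hr) hnP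
      · exact hd.1
      · exact absurd (show pairRel n T1 T1' a b from
          Or.inr (Relation.TransGen.single (Or.inr hi))) hnP
  · rintro ⟨hP, hextra⟩
    set F : ℕ → ℕ := fun x => Nat.findGreatest (fun c => Q.rel c x) n with hFdef
    have hFle : ∀ x, F x ≤ n := by
      intro x
      simp only [hFdef]
      exact Nat.findGreatest_le n
    have hxF : ∀ x, 1 ≤ x → x ≤ n → x ≤ F x := by
      intro x hx1 hx2
      simp only [hFdef]
      exact Nat.le_findGreatest hx2 (Q.refl x hx1 (by omega))
    have hrelF : ∀ x, 1 ≤ x → x ≤ n → Q.rel (F x) x := by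
      intro x hx1 hx2
      have h := Nat.findGreatest_spec (P := fun c => Q.rel c x) hx2 (Q.refl x hx1 (by omega))
      simpa [hFdef] using h
    have hFmax : ∀ x c, c ≤ n → Q.rel c x → c ≤ F x := by
      intro x c hc hrel
      simp only [hFdef]
      exact Nat.le_findGreatest hc hrel
    have hIntv : ∀ x c, 1 ≤ x → x ≤ n → x < c → c ≤ F x → Q.rel c x := by
      intro x c hx1 hx2 hxc hcF
      rcases Nat.eq_or_lt_of_le hcF with h | h
      · rw [h]; exact hrelF x hx1 hx2
      · exact Q.decCond x c (F x) (hrelF x hx1 hx2) hxc h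
    have hub : ∀ z, 0 < z → z ≤ n → z ≤ F z ∧ F z ≤ n := by
      intro z h1z h2z
      exact ⟨hxF z h1z h2z, hFle z⟩
    have hnest : ∀ y z, 0 < y → y ≤ n → y < z → z ≤ F y → F z ≤ F y := by
      intro y z hy1 hy2 hyz hzF
      have hz2 : z ≤ n := le_trans hzF (hFle y)
      rcases Nat.eq_or_lt_of_le (hxF z (by omega) hz2) with h | h
      · omega
      · have h1 : Q.rel (F z) z := hrelF z (by omega) hz2
        have h2 : Q.rel z y := hIntv y z (by omega) hy2 hyz hzF
        exact hFmax y (F z) (hFle z) (Q.trans (F z) z y h1 h2)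
    set T2 := BinTree.treeOf F 0 n with hT2def
    obtain ⟨hsz2', hfT2⟩ := BinTree.treeOf_spec n F 0 n (by omega) hub hnest
    have hsz2 : T2.size = n := by rw [hT2def, hsz2']; omega
    have hf12 : ∀ x, T1.fvec 0 x ≤ T2.fvec 0 x := by
      intro x
      rcases Nat.lt_or_ge 0 x with hx1 | hx1
      swap
      · rw [BinTree.fvec_out T1 0 x (by omega), BinTree.fvec_out T2 0 x (by omega)]
      rcases le_or_gt x n with hx2 | hx2
      swap
      · rw [BinTree.fvec_out T1 0 x (by omega), BinTree.fvec_out T2 0 x (by omega)]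
      rw [hfT2 x hx1 hx2]
      have hb := BinTree.fvec_bounds T1 0 x (by omega) (by omega)
      rcases Nat.eq_or_lt_of_le hb.1 with h | h
      · rw [← h]; exact hxF x (by omega) hx2
      · have hdec : decRel T1 (T1.fvec 0 x) x := decRel_iff.2 ⟨h, hx1, le_refl _⟩
        have hq : Q.rel (T1.fvec 0 x) x :=
          hP _ _ (Or.inr (Relation.TransGen.single (Or.inl hdec)))
        exact hFmax x _ (by omega) hq
    have hf21' : ∀ x, T2.fvec 0 x ≤ T1'.fvec 0 x := by
      intro x
      have hFxn := hFle x
      rcases Nat.lt_or_ge 0 x with hx1 | hx1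
      swap
      · rw [BinTree.fvec_out T2 0 x (by omega), BinTree.fvec_out T1' 0 x (by omega)]
      rcases le_or_gt x n with hx2 | hx2
      swap
      · rw [BinTree.fvec_out T2 0 x (by omega), BinTree.fvec_out T1' 0 x (by omega)]
      rw [hfT2 x hx1 hx2]
      rcases Nat.eq_or_lt_of_le (hxF x (by omega) hx2) with h | h
      · rw [← h]
        exact (BinTree.fvec_bounds T1' 0 x (by omega) (by omega)).1
      · have hq : Q.rel (F x) x := hrelF x (by omega) hx2
        obtain ⟨m, hm1, hm2, hm3, hm4⟩ :=
          BinTree.join T1' 0 x (F x) (by omega) (by omega) (by omega)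
        rcases Nat.eq_or_lt_of_le hm1 with hxm | hxm
        · rw [← hxm] at hm4
          have := (BinTree.sub_iff T1' 0 (F x) x).1 hm4
          omega
        · exfalso
          have hinc : incRel T1' x m := ⟨hxm, hm3⟩
          have hq1 : Q.rel x m :=
            hP _ _ (Or.inr (Relation.TransGen.single (Or.inr hinc)))
          have hq2 : Q.rel m x := by
            rcases Nat.eq_or_lt_of_le hm2 with h' | h'
            · rw [h']; exact hq
            · exact Q.decCond x m (F x) hq hxm h'
          have := Q.antisymm x m hq1 hq2
          omega
    have ht12 : tamariLE T1 T2 :=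
      BinTree.to_tamari_aux _ T1 T2 (by omega) hf12 (le_refl _)
    have ht21' : tamariLE T2 T1' :=
      BinTree.to_tamari_aux _ T2 T1' (by omega) hf21' (le_refl _)
    refine ⟨T2, hsz2, ht12, ht21', ?_⟩
    have hgen : ∀ x y, (decRel T2 x y ∨ incRel T1' x y) → Q.rel x y := by
      rintro x y (hd | hi)
      · have hdd := decRel_iff.1 hd
        have hds := decRel_supp hd
        rw [hfT2 y (by omega) (by omega)] at hdd
        exact hIntv y x (by omega) (by omega) hdd.1 hdd.2.2
      · exact hP _ _ (Or.inr (Relation.TransGen.single (Or.inr hi)))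
    funext a b
    apply propext
    constructor
    · intro h
      have hsupp := Q.supp a b h
      rw [hQn] at hsupp
      rcases lt_trichotomy a b with hab | hab | hab
      · have hPab : pairRel n T1 T1' a b := by
          by_contra hn
          have := hextra a b h hn
          omega
        rcases closure_shape h1 h1' hf11' hg11' hPab with hr | hd | hi
        · omega
        · have := hd.1; omega
        · exact Or.inr (Relation.TransGen.single (Or.inr hi))
      · exact Or.inl ⟨hab, by omega, by omega⟩
      · have haF : a ≤ F b := hFmax b a (by omega) h
        have hdec : decRel T2 a b := decRel_iff.2 ⟨hab, by omega, by
          rw [hfT2 b (by omega) (by omega)]; exact haF⟩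
        exact Or.inr (Relation.TransGen.single (Or.inl hdec))
    · intro h
      rcases h with ⟨rfl, ha1, ha2⟩ | h
      · exact Q.refl a ha1 (by omega)
      · induction h with
        | single hgen' => exact hgen _ _ hgen'
        | tail _ hstep ih => exact Q.trans _ _ _ ih (hgen _ _ hstep)

namespace BinTree

def mirror : BinTree → BinTree
  | leaf => leaf
  | node l r => node (mirror r) (mirror l)

lemma mirror_size : ∀ (T : BinTree), (mirror T).size = T.size := by
  intro T
  induction T with
  | leaf => rfl
  | node l r ihl ihr => simp [mirror, size, ihl, ihr]; omega

lemma mirror_mirror : ∀ (T : BinTree), mirror (mirror T) = T := by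
  intro T
  induction T with
  | leaf => rfl
  | node l r ihl ihr => simp [mirror, ihl, ihr]

lemma fvec_shift : ∀ (T : BinTree) (o d y : ℕ), T.fvec (o + d) (y + d) = T.fvec o y + d := by
  intro T
  induction T with
  | leaf => intro o d y; rfl
  | node l r ihl ihr =>
    intro o d y
    simp only [fvec]
    have h1 : o + d + l.size = o + l.size + d := by ring
    have h2 : o + d + l.size + 1 = o + l.size + 1 + d := by ring
    split_ifs with c1 c2 c3 c4 c5 <;> try omega
    · exact ihl o d y
    · rw [h2]; exact ihr (o + l.size + 1) d y

lemma gvec_shift : ∀ (T : BinTree) (o d y : ℕ), T.gvec (o + d) (y + d) = T.gvec o y + d := by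
  intro T
  induction T with
  | leaf => intro o d y; rfl
  | node l r ihl ihr =>
    intro o d y
    simp only [gvec]
    have h1 : o + d + l.size = o + l.size + d := by ring
    have h2 : o + d + l.size + 1 = o + l.size + 1 + d := by ring
    split_ifs with c1 c2 c3 c4 c5 <;> try omega
    · exact ihl o d y
    · rw [h2]; exact ihr (o + l.size + 1) d y

lemma fvec_mirror : ∀ (T : BinTree) (y y' : ℕ), 0 < y → y ≤ T.size →
    y + y' = T.size + 1 → (mirror T).fvec 0 y + T.gvec 0 y' = T.size + 1 := by
  intro T
  induction T with
  | leaf => intro y y' h1 h2; simp [size] at h2; omega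
  | node l r ihl ihr =>
    intro y y' h1 h2 h3
    simp only [size] at h2 h3
    simp only [mirror, fvec, gvec, mirror_size, size]
    rcases Nat.lt_or_ge r.size y with hy | hy
    · rcases Nat.eq_or_lt_of_le (Nat.succ_le_of_lt hy) with hroot | hright
      · -- y is root of mirror T, y' is root of T
        split_ifs <;> omega
      · -- y in right part of mirror T  (= mirror l), y' in left part of T (= l)
        obtain ⟨y2, rfl⟩ : ∃ y2, y = y2 + (r.size + 1) := ⟨y - (r.size + 1), by omega⟩
        have hs := fvec_shift (mirror l) 0 (r.size + 1) y2
        have hih := ihl y2 y' (by omega) (by omega) (by omega)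
        simp only [Nat.zero_add] at *
        split_ifs <;> omega
    · -- y in left part of mirror T (= mirror r), y' in right part of T (= r)
      obtain ⟨y2, rfl⟩ : ∃ y2, y' = y2 + (l.size + 1) := ⟨y' - (l.size + 1), by omega⟩
      have hs := gvec_shift r 0 (l.size + 1) y2
      have hih := ihr y y2 (by omega) (by omega) (by omega)
      simp only [Nat.zero_add] at *
      split_ifs <;> omega

lemma gvec_mirror : ∀ (T : BinTree) (y y' : ℕ), 0 < y → y ≤ T.size →
    y + y' = T.size + 1 → (mirror T).gvec 0 y + T.fvec 0 y' = T.size + 1 := by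
  intro T y y' h1 h2 h3
  have := fvec_mirror (mirror T) y' y (by omega) (by rw [mirror_size]; omega)
    (by rw [mirror_size]; omega)
  rw [mirror_mirror] at this
  rw [mirror_size] at this
  omega

lemma sub_mirror {T : BinTree} {a b a' b' : ℕ} (ha : a + a' = T.size + 1)
    (hb : b + b' = T.size + 1) :
    ((mirror T).sub 0 a b ↔ T.sub 0 a' b') := by
  constructor
  · intro h
    have hs := sub_support h
    rw [mirror_size] at hs
    rw [sub_iff] at h ⊢
    rw [mirror_size] at h
    have h1 := fvec_mirror T b b' (by omega) (by omega) (by omega)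
    have h2 := gvec_mirror T b b' (by omega) (by omega) (by omega)
    have h3 := fvec_bounds T 0 b' (by omega) (by omega)
    have h4 := gvec_bounds T 0 b' (by omega) (by omega)
    omega
  · intro h
    have hs := sub_support h
    rw [sub_iff] at h ⊢
    rw [mirror_size]
    have h1 := fvec_mirror T b b' (by omega) (by omega) (by omega)
    have h2 := gvec_mirror T b b' (by omega) (by omega) (by omega)
    have h3 := fvec_bounds (mirror T) 0 b (by omega) (by rw [mirror_size]; omega)
    have h4 := gvec_bounds (mirror T) 0 b (by omega) (by rw [mirror_size]; omega)
    rw [mirror_size] at h3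
    omega

lemma rot_mirror : ∀ {A B : BinTree}, Rot A B → Rot (mirror B) (mirror A) := by
  intro A B h
  induction h with
  | base A B C =>
    simp only [mirror]
    exact Rot.base (mirror C) (mirror B) (mirror A)
  | left r _ ih => simp only [mirror]; exact Rot.right (mirror r) ih
  | right l _ ih => simp only [mirror]; exact Rot.left (mirror l) ih

end BinTree

lemma tamari_mirror {A B : BinTree} (h : tamariLE A B) :
    tamariLE (BinTree.mirror B) (BinTree.mirror A) := by
  induction h with
  | refl => exact Relation.ReflTransGen.refl
  | tail _ hr ih => exact Relation.ReflTransGen.head (BinTree.rot_mirror hr) ih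

lemma decRel_mirror {A : BinTree} {x y x' y' : ℕ} (hx : x + x' = A.size + 1)
    (hy : y + y' = A.size + 1) :
    decRel (BinTree.mirror A) x y ↔ incRel A x' y' := by
  constructor
  · rintro ⟨h1, h2⟩
    have hs := BinTree.sub_support h2
    rw [BinTree.mirror_size] at hs
    refine ⟨by omega, ?_⟩
    exact (BinTree.sub_mirror hx hy).1 h2
  · rintro ⟨h1, h2⟩
    have hs := BinTree.sub_support h2
    refine ⟨by omega, ?_⟩
    exact (BinTree.sub_mirror hx hy).2 h2

lemma incRel_mirror {A : BinTree} {x y x' y' : ℕ} (hx : x + x' = A.size + 1)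
    (hy : y + y' = A.size + 1) :
    incRel (BinTree.mirror A) x y ↔ decRel A x' y' := by
  constructor
  · rintro ⟨h1, h2⟩
    have hs := BinTree.sub_support h2
    rw [BinTree.mirror_size] at hs
    refine ⟨by omega, ?_⟩
    exact (BinTree.sub_mirror hx hy).1 h2
  · rintro ⟨h1, h2⟩
    have hs := BinTree.sub_support h2
    refine ⟨by omega, ?_⟩
    exact (BinTree.sub_mirror hx hy).2 h2

lemma pairRel_supp {n : ℕ} {A B : BinTree} (hA : A.size = n) (hB : B.size = n)
    {a b : ℕ} (h : pairRel n A B a b) : 1 ≤ a ∧ a ≤ n ∧ 1 ≤ b ∧ b ≤ n := by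
  rcases h with ⟨rfl, h1, h2⟩ | h
  · omega
  · induction h with
    | single h =>
      rcases h with h | h
      · have := decRel_supp h; omega
      · have := incRel_supp h; omega
    | tail _ hstep ih =>
      rcases hstep with h | h
      · have := decRel_supp h; omega
      · have := incRel_supp h; omega

/-- Conjugation of generated pair relations under mirror. -/
lemma pairRel_mirror {n : ℕ} {A B : BinTree} (hA : A.size = n) (hB : B.size = n)
    {a b a' b' : ℕ} (ha : a + a' = n + 1) (hb : b + b' = n + 1)
    (h : pairRel n A B a b) :
    pairRel n (BinTree.mirror B) (BinTree.mirror A) a' b' := by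
  have hgen : ∀ x y x' y', x + x' = n + 1 → y + y' = n + 1 →
      (decRel A x y ∨ incRel B x y) →
      (decRel (BinTree.mirror B) x' y' ∨ incRel (BinTree.mirror A) x' y') := by
    rintro x y x' y' hx hy (h | h)
    · right
      refine (incRel_mirror (A := A) ?_ ?_).2 h <;> omega
    · left
      refine (decRel_mirror (A := B) ?_ ?_).2 h <;> omega
  rcases h with ⟨rfl, h1, h2⟩ | h
  · exact Or.inl ⟨by omega, by omega, by omega⟩
  · right
    induction h generalizing a' b' with
    | single h =>
      exact Relation.TransGen.single (hgen _ _ _ _ ha hb h)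
    | tail hT hstep ih =>
      rename_i bmid cend
      have hsupmid : 1 ≤ bmid ∧ bmid ≤ n := by
        rcases hstep with h | h
        · have := decRel_supp h; rw [hA] at this; omega
        · have := incRel_supp h; rw [hB] at this; omega
      have hmid : bmid + (n + 1 - bmid) = n + 1 := by omega
      exact Relation.TransGen.tail (ih ha hmid) (hgen bmid cend _ b' hmid hb hstep)

/-- The label-reversed interval poset. -/
def mirrorPoset (Q : IntervalPoset) : IntervalPoset where
  n := Q.n
  rel a b := (1 ≤ a ∧ a ≤ Q.n ∧ 1 ≤ b ∧ b ≤ Q.n) ∧ Q.rel (Q.n + 1 - a) (Q.n + 1 - b)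
  supp := fun a b h => h.1
  refl := fun a h1 h2 => ⟨⟨h1, h2, h1, h2⟩, Q.refl _ (by omega) (by omega)⟩
  antisymm := by
    rintro a b ⟨hr1, hq1⟩ ⟨hr2, hq2⟩
    have := Q.antisymm _ _ hq1 hq2
    omega
  trans := by
    rintro a b c ⟨hr1, hq1⟩ ⟨hr2, hq2⟩
    exact ⟨⟨hr1.1, hr1.2.1, hr2.2.2.1, hr2.2.2.2⟩, Q.trans _ _ _ hq1 hq2⟩
  incCond := by
    rintro a b c ⟨hr, hq⟩ hab hbc
    refine ⟨⟨by omega, by omega, by omega, by omega⟩, ?_⟩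
    exact Q.decCond _ _ _ hq (by omega) (by omega)
  decCond := by
    rintro a b c ⟨hr, hq⟩ hab hbc
    refine ⟨⟨by omega, by omega, by omega, by omega⟩, ?_⟩
    exact Q.incCond _ _ _ hq (by omega) (by omega)

lemma mirrorPoset_rel (Q : IntervalPoset) (a b : ℕ) :
    (mirrorPoset Q).rel a b ↔
      ((1 ≤ a ∧ a ≤ Q.n ∧ 1 ≤ b ∧ b ≤ Q.n) ∧ Q.rel (Q.n + 1 - a) (Q.n + 1 - b)) :=
  Iff.rfl

lemma mirrorPoset_n (Q : IntervalPoset) : (mirrorPoset Q).n = Q.n := rfl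

lemma pairRel_conj {n : ℕ} {A B : BinTree} (hA : A.size = n) (hB : B.size = n)
    {a b : ℕ} (h : pairRel n A B a b) :
    pairRel n (BinTree.mirror B) (BinTree.mirror A) (n + 1 - a) (n + 1 - b) := by
  have hs := pairRel_supp hA hB h
  exact pairRel_mirror hA hB (by omega) (by omega) h

lemma stmt_part2 (n : ℕ) (T1 T1' : BinTree) (h1 : T1.size = n) (h1' : T1'.size = n)
    (hle : tamariLE T1 T1') (Q : IntervalPoset) (hQn : Q.n = n) :
    (∃ T3 : BinTree, T3.size = n ∧ tamariLE T1 T3 ∧ tamariLE T3 T1' ∧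
        Q.rel = pairRel n T1 T3) ↔
      ((∀ a b, pairRel n T1 T1' a b → Q.rel a b) ∧
        ∀ a b, Q.rel a b → ¬ pairRel n T1 T1' a b → a < b) := by
  classical
  have hm1 : (BinTree.mirror T1).size = n := by rw [BinTree.mirror_size]; exact h1
  have hm1' : (BinTree.mirror T1').size = n := by rw [BinTree.mirror_size]; exact h1'
  set Q' := mirrorPoset Q with hQ'def
  have hQ'n : Q'.n = n := by rw [hQ'def, mirrorPoset_n, hQn]
  have hQ'rel : ∀ u v, Q'.rel u v ↔
      ((1 ≤ u ∧ u ≤ n ∧ 1 ≤ v ∧ v ≤ n) ∧ Q.rel (n + 1 - u) (n + 1 - v)) := by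
    intro u v
    rw [hQ'def, mirrorPoset_rel, hQn]
  have hiff1 := stmt_part1 n (BinTree.mirror T1') (BinTree.mirror T1) hm1' hm1
    (tamari_mirror hle) Q' hQ'n
  have hL : (∃ T3 : BinTree, T3.size = n ∧ tamariLE T1 T3 ∧ tamariLE T3 T1' ∧
      Q.rel = pairRel n T1 T3) ↔
      (∃ T2 : BinTree, T2.size = n ∧ tamariLE (BinTree.mirror T1') T2 ∧
        tamariLE T2 (BinTree.mirror T1) ∧ Q'.rel = pairRel n T2 (BinTree.mirror T1)) := by
    constructor
    · rintro ⟨T3, hsz3, h13, h31', hQeq⟩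
      refine ⟨BinTree.mirror T3, by rw [BinTree.mirror_size]; exact hsz3,
        tamari_mirror h31', tamari_mirror h13, ?_⟩
      have hm3 : (BinTree.mirror T3).size = n := by rw [BinTree.mirror_size]; exact hsz3
      funext a b
      apply propext
      rw [hQ'rel a b]
      constructor
      · rintro ⟨hr, hq⟩
        rw [hQeq] at hq
        have hc := pairRel_conj h1 hsz3 hq
        rw [show n + 1 - (n + 1 - a) = a by omega, show n + 1 - (n + 1 - b) = b by omega]
          at hc
        exact hc
      · intro hp
        have hs := pairRel_supp hm3 hm1 hp
        have hc := pairRel_conj hm3 hm1 hp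
        rw [BinTree.mirror_mirror, BinTree.mirror_mirror] at hc
        rw [← hQeq] at hc
        exact ⟨⟨by omega, by omega, by omega, by omega⟩, hc⟩
    · rintro ⟨T2, hsz2, hA, hB, hQ'eq⟩
      have hm2 : (BinTree.mirror T2).size = n := by rw [BinTree.mirror_size]; exact hsz2
      have ht1 : tamariLE T1 (BinTree.mirror T2) := by
        have := tamari_mirror hB
        rwa [BinTree.mirror_mirror] at this
      have ht2 : tamariLE (BinTree.mirror T2) T1' := by
        have := tamari_mirror hA
        rwa [BinTree.mirror_mirror] at this
      refine ⟨BinTree.mirror T2, hm2, ht1, ht2, ?_⟩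
      funext u v
      apply propext
      constructor
      · intro hq
        have hsup := Q.supp u v hq
        rw [hQn] at hsup
        have hq' : Q'.rel (n + 1 - u) (n + 1 - v) := by
          rw [hQ'rel]
          refine ⟨⟨by omega, by omega, by omega, by omega⟩, ?_⟩
          rw [show n + 1 - (n + 1 - u) = u by omega, show n + 1 - (n + 1 - v) = v by omega]
          exact hq
        rw [hQ'eq] at hq'
        have hc := pairRel_conj hsz2 hm1 hq'
        rw [BinTree.mirror_mirror, show n + 1 - (n + 1 - u) = u by omega,
          show n + 1 - (n + 1 - v) = v by omega] at hc
        exact hc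
      · intro hp
        have hs := pairRel_supp h1 hm2 hp
        have hc := pairRel_conj h1 hm2 hp
        rw [BinTree.mirror_mirror] at hc
        rw [← hQ'eq] at hc
        rw [hQ'rel] at hc
        obtain ⟨hr, hq⟩ := hc
        rwa [show n + 1 - (n + 1 - u) = u by omega,
          show n + 1 - (n + 1 - v) = v by omega] at hq
  have hR : ((∀ a b, pairRel n (BinTree.mirror T1') (BinTree.mirror T1) a b → Q'.rel a b) ∧
      ∀ a b, Q'.rel a b → ¬ pairRel n (BinTree.mirror T1') (BinTree.mirror T1) a b → b < a) ↔
      ((∀ a b, pairRel n T1 T1' a b → Q.rel a b) ∧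
        ∀ a b, Q.rel a b → ¬ pairRel n T1 T1' a b → a < b) := by
    have hconv : ∀ a b, pairRel n T1 T1' a b →
        pairRel n (BinTree.mirror T1') (BinTree.mirror T1) (n + 1 - a) (n + 1 - b) :=
      fun a b h => pairRel_conj h1 h1' h
    have hconv' : ∀ a b, pairRel n (BinTree.mirror T1') (BinTree.mirror T1) a b →
        pairRel n T1 T1' (n + 1 - a) (n + 1 - b) := by
      intro a b h
      have hc := pairRel_conj hm1' hm1 h
      rwa [BinTree.mirror_mirror, BinTree.mirror_mirror] at hc
    constructor
    · rintro ⟨hi, hii⟩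
      constructor
      · intro a b hp
        have hs := pairRel_supp h1 h1' hp
        have h2 := hi _ _ (hconv a b hp)
        rw [hQ'rel] at h2
        obtain ⟨hr, hq⟩ := h2
        rwa [show n + 1 - (n + 1 - a) = a by omega,
          show n + 1 - (n + 1 - b) = b by omega] at hq
      · intro a b hq hnp
        have hsup := Q.supp a b hq
        rw [hQn] at hsup
        have hq' : Q'.rel (n + 1 - a) (n + 1 - b) := by
          rw [hQ'rel]
          refine ⟨⟨by omega, by omega, by omega, by omega⟩, ?_⟩
          rw [show n + 1 - (n + 1 - a) = a by omega, show n + 1 - (n + 1 - b) = b by omega]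
          exact hq
        have hnp' : ¬ pairRel n (BinTree.mirror T1') (BinTree.mirror T1)
            (n + 1 - a) (n + 1 - b) := by
          intro hp'
          have hc := hconv' _ _ hp'
          rw [show n + 1 - (n + 1 - a) = a by omega,
            show n + 1 - (n + 1 - b) = b by omega] at hc
          exact hnp hc
        have := hii _ _ hq' hnp'
        omega
    · rintro ⟨hi, hii⟩
      constructor
      · intro a b hp
        have hs := pairRel_supp hm1' hm1 hp
        have h2 := hi _ _ (hconv' a b hp)
        rw [hQ'rel]
        exact ⟨⟨by omega, by omega, by omega, by omega⟩, h2⟩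
      · intro a b hq' hnp'
        rw [hQ'rel] at hq'
        obtain ⟨hr, hq⟩ := hq'
        have hnp : ¬ pairRel n T1 T1' (n + 1 - a) (n + 1 - b) := by
          intro hp
          have hc := hconv _ _ hp
          rw [show n + 1 - (n + 1 - a) = a by omega,
            show n + 1 - (n + 1 - b) = b by omega] at hc
          exact hnp' hc
        have := hii _ _ hq hnp
        omega
  exact hL.trans (hiff1.trans hR)

/-- Raising the lower endpoint of a Tamari interval corresponds to adding only
decreasing relations to its interval-poset; lowering the upper endpoint to
adding only increasing relations. -/
theorem stmt5 (n : ℕ) (T1 T1' : BinTree) (h1 : T1.size = n) (h1' : T1'.size = n)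
    (hle : tamariLE T1 T1') (Q : IntervalPoset) (hQn : Q.n = n) :
    ((∃ T2 : BinTree, T2.size = n ∧ tamariLE T1 T2 ∧ tamariLE T2 T1' ∧
        Q.rel = pairRel n T2 T1') ↔
      ((∀ a b, pairRel n T1 T1' a b → Q.rel a b) ∧
        ∀ a b, Q.rel a b → ¬ pairRel n T1 T1' a b → b < a)) ∧
    ((∃ T3 : BinTree, T3.size = n ∧ tamariLE T1 T3 ∧ tamariLE T3 T1' ∧
        Q.rel = pairRel n T1 T3) ↔
      ((∀ a b, pairRel n T1 T1' a b → Q.rel a b) ∧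
        ∀ a b, Q.rel a b → ¬ pairRel n T1 T1' a b → a < b)) :=
  ⟨stmt_part1 n T1 T1' h1 h1' hle Q hQn, stmt_part2 n T1 T1' h1 h1' hle Q hQn⟩
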